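/- Let c : (B, b) → (A, a) be a morphism of complexes of projective R-modules with A acyclic (nonnegatively graded, homology only in degree 0, and c_0 induces the zero map appropriately so that a nullhomotopy exists). Suppose each B_i decomposes as B_i = B_i' ⊕ B_i'' with b_i(B_i') ⊆ B_{i-1}', c_i(B_i') = 0 for all i, and B_0 = B_0'. Then there exists a homotopy h : B → A[1] (i.e., a_{i+1} ∘ h_i = c_i − h_{i-1} ∘ b_i with h_{-1} = 0) such that h_i(B_i') = 0 for all i. -/

import Mathlib

/-- Generic recursive construction of a sequence in a family of types with a
binary relation between consecutive terms. -/
noncomputable def stmt4SeqAux {T : ℕ → Type*} (Q : ∀ n, T n → T (n + 1) → Prop) (t0 : T 0)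
    (step : ∀ n, ∀ t : T n, {t' : T (n + 1) // Q n t t'}) : ∀ n, T n
  | 0 => t0
  | n + 1 => (step n (stmt4SeqAux Q t0 step n)).1

lemma stmt4SeqAux_succ {T : ℕ → Type*} (Q : ∀ n, T n → T (n + 1) → Prop) (t0 : T 0)
    (step : ∀ n, ∀ t : T n, {t' : T (n + 1) // Q n t t'}) (n : ℕ) :
    Q n (stmt4SeqAux Q t0 step n) (stmt4SeqAux Q t0 step (n + 1)) :=
  (step n (stmt4SeqAux Q t0 step n)).2

/-- One step of the construction: lift the defect through the acyclic complex. -/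
lemma stmt4_step {R : Type*} [CommRing R]
    (B A : ℕ → Type*)
    [∀ i, AddCommGroup (B i)] [∀ i, Module R (B i)]
    [∀ i, AddCommGroup (A i)] [∀ i, Module R (A i)]
    [∀ i, Module.Projective R (B i)]
    (b : ∀ i, B (i + 1) →ₗ[R] B i) (a : ∀ i, A (i + 1) →ₗ[R] A i)
    (c : ∀ i, B i →ₗ[R] A i)
    (hB : ∀ i, ∀ x, b i (b (i + 1) x) = 0)
    (hacyc : ∀ i, LinearMap.range (a (i + 1)) = LinearMap.ker (a i))
    (hc : ∀ i, ∀ x, a i (c (i + 1) x) = c i (b i x))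
    (B' : ∀ i, Submodule R (B i)) (B'' : ∀ i, Submodule R (B i))
    (hcompl : ∀ i, IsCompl (B' i) (B'' i))
    (hbB' : ∀ i, (B' (i + 1)).map (b i) ≤ B' i)
    (hcB' : ∀ i, ∀ x ∈ B' i, c i x = 0)
    (n : ℕ) (f : B n →ₗ[R] A (n + 1))
    (hf0 : ∀ x ∈ B' n, f x = 0)
    (hf : ∀ x, a n (f (b n x)) = c n (b n x)) :
    ∃ f' : B (n + 1) →ₗ[R] A (n + 2),
      (∀ x ∈ B' (n + 1), f' x = 0) ∧
      (∀ x, a (n + 1) (f' x) + f (b n x) = c (n + 1) x) ∧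
      (∀ x, a (n + 1) (f' (b (n + 1) x)) = c (n + 1) (b (n + 1) x)) := by
  set g : B (n + 1) →ₗ[R] A (n + 1) := c (n + 1) - f.comp (b n) with hgdef
  have hgker : ∀ x, g x ∈ LinearMap.range (a (n + 1)) := by
    intro x
    rw [hacyc n, LinearMap.mem_ker]
    simp [hgdef, hc n x, hf x]
  have hgB' : ∀ x ∈ B' (n + 1), g x = 0 := by
    intro x hx
    have hbx : b n x ∈ B' n := hbB' n ⟨x, hx, rfl⟩
    simp [hgdef, hcB' (n + 1) x hx, hf0 _ hbx]
  obtain ⟨l, hl⟩ := Module.projective_lifting_property (a (n + 1)).rangeRestrict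
    (LinearMap.codRestrict _ g hgker) (a (n + 1)).surjective_rangeRestrict
  have hl' : ∀ x, a (n + 1) (l x) = g x := fun x =>
    congrArg Subtype.val (LinearMap.congr_fun hl x)
  set π : B (n + 1) →ₗ[R] B (n + 1) :=
    (B'' (n + 1)).subtype.comp
      (Submodule.projectionOnto (B'' (n + 1)) (B' (n + 1)) (hcompl (n + 1)).symm)
    with hπdef
  have hπ0 : ∀ x ∈ B' (n + 1), π x = 0 := by
    intro x hx
    simp [hπdef, Submodule.projectionOnto_apply_of_mem_right (hcompl (n + 1)).symm hx]
  have hπg : ∀ x, g (π x) = g x := by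
    intro x
    have hsum := Submodule.projection_add_projection_eq_self (hcompl (n + 1)) x
    have hmem : ((B' (n + 1)).projectionOnto (B'' (n + 1)) (hcompl (n + 1)) x : B (n + 1))
        ∈ B' (n + 1) := Submodule.coe_mem _
    calc g (π x) = g (π x) + g ((B' (n + 1)).projectionOnto (B'' (n + 1)) (hcompl (n + 1)) x) := by
          rw [hgB' _ hmem, add_zero]
      _ = g x := by
          rw [← map_add, hπdef]
          simp only [LinearMap.comp_apply, Submodule.subtype_apply]
          exact congrArg g ((add_comm _ _).trans hsum)
  have key : ∀ x, a (n + 1) (l (π x)) + f (b n x) = c (n + 1) x := by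
    intro x
    rw [hl', hπg]
    simp [hgdef]
  refine ⟨l.comp π, ?_, ?_, ?_⟩
  · intro x hx
    simp [LinearMap.comp_apply, hπ0 x hx]
  · intro x
    exact key x
  · intro x
    have := key (b (n + 1) x)
    rw [hB n x, map_zero, add_zero] at this
    exact this

/-- Lemma 2.3: Let `c : (B, b) → (A, a)` be a morphism of
(nonnegatively graded) complexes of projective `R`-modules with `A` acyclic
and `c₀ = 0`.  Suppose each `Bᵢ` decomposes as `Bᵢ = Bᵢ' ⊕ Bᵢ''` with
`bᵢ(Bᵢ') ⊆ B_{i-1}'`, `cᵢ(Bᵢ') = 0` for all `i`, and `B₀ = B₀'`.  Then there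
exists a homotopy `h : B → A[1]` (i.e. `cᵢ = a_{i+1} ∘ hᵢ + h_{i-1} ∘ bᵢ`,
with `h_{-1} = 0`) such that `hᵢ(Bᵢ') = 0` for all `i`.

Complexes are encoded by families of modules with differentials
`b i : B (i+1) →ₗ B i`, `a i : A (i+1) →ₗ A i`; the direct summand `Bᵢ'` is a
submodule `B' i` (with a complement, i.e. a genuine direct summand). -/
theorem stmt4 {R : Type*} [CommRing R]
    (B A : ℕ → Type*)
    [∀ i, AddCommGroup (B i)] [∀ i, Module R (B i)]
    [∀ i, AddCommGroup (A i)] [∀ i, Module R (A i)]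
    [∀ i, Module.Projective R (B i)] [∀ i, Module.Projective R (A i)]
    (b : ∀ i, B (i + 1) →ₗ[R] B i) (a : ∀ i, A (i + 1) →ₗ[R] A i)
    (c : ∀ i, B i →ₗ[R] A i)
    -- B and A are complexes
    (hB : ∀ i, ∀ x, b i (b (i + 1) x) = 0)
    (hA : ∀ i, ∀ x, a i (a (i + 1) x) = 0)
    -- A is acyclic: homology vanishes in positive degrees
    (hacyc : ∀ i, LinearMap.range (a (i + 1)) = LinearMap.ker (a i))
    -- c is a chain map with c₀ = 0
    (hc : ∀ i, ∀ x, a i (c (i + 1) x) = c i (b i x))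
    (hc0 : c 0 = 0)
    -- the direct summands Bᵢ'
    (B' : ∀ i, Submodule R (B i)) (B'' : ∀ i, Submodule R (B i))
    (hcompl : ∀ i, IsCompl (B' i) (B'' i))
    (hbB' : ∀ i, (B' (i + 1)).map (b i) ≤ B' i)
    (hcB' : ∀ i, ∀ x ∈ B' i, c i x = 0)
    (hB0 : B' 0 = ⊤) :
    ∃ h : ∀ i, B i →ₗ[R] A (i + 1),
      (∀ x, a 0 (h 0 x) = c 0 x) ∧
      (∀ i, ∀ x, a (i + 1) (h (i + 1) x) + h i (b i x) = c (i + 1) x) ∧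
      (∀ i, ∀ x ∈ B' i, h i x = 0) := by
  classical
  -- the family of "admissible" maps at each level
  let T : ℕ → Type _ := fun n => {f : B n →ₗ[R] A (n + 1) //
    (∀ x ∈ B' n, f x = 0) ∧ ∀ x, a n (f (b n x)) = c n (b n x)}
  let Q : ∀ n, T n → T (n + 1) → Prop := fun n t t' =>
    ∀ x, a (n + 1) (t'.1 x) + t.1 (b n x) = c (n + 1) x
  have t0 : T 0 := ⟨0, fun x _ => rfl, fun x => by simp [hc0]⟩
  have stp : ∀ n, ∀ t : T n, {t' : T (n + 1) // Q n t t'} := by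
    intro n t
    have hex := stmt4_step B A b a c hB hacyc hc B' B'' hcompl hbB' hcB'
      n t.1 t.2.1 t.2.2
    exact ⟨⟨hex.choose, hex.choose_spec.1, hex.choose_spec.2.2⟩, hex.choose_spec.2.1⟩
  set F := stmt4SeqAux Q t0 stp with hF
  refine ⟨fun n => (F n).1, ?_, ?_, ?_⟩
  · intro x
    have h0 : (F 0).1 x = 0 := (F 0).2.1 x (by rw [hB0]; trivial)
    rw [h0, hc0]
    simp
  · intro i x
    exact stmt4SeqAux_succ Q t0 stp i x
  · intro i x hx
    exact (F i).2.1 x hx
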